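/- If A ∈ 𝒞 has total rank one, i.e., Σ_{i ∈ I} rank(A i) = 1 (equivalently, exactly one component A i₀ is nonzero and has rank one, all other components being zero), then A is an extreme point of 𝒞. -/

import Mathlib

open ContinuousLinearMap

/-- The linear map `L(A) = (1/|G|) · Σ_{i ∈ I} Σ_{g ∈ G} (U g) ∘ (A i) ∘ (U g)†`
associated to a family of operators `A : I → (H →L[ℂ] H)`. -/
noncomputable def Lmap {H : Type*} [NormedAddCommGroup H] [InnerProductSpace ℂ H]
    [FiniteDimensional ℂ H] {G : Type*} [Group G] [Fintype G] {I : Type*} [Fintype I]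
    (U : G → (H →L[ℂ] H)) (A : I → (H →L[ℂ] H)) : H →L[ℂ] H :=
  (Fintype.card G : ℂ)⁻¹ •
    ∑ i : I, ∑ g : G, U g ∘L A i ∘L ContinuousLinearMap.adjoint (U g)

/-- The convex set `𝒞` of block operators corresponding to covariant POVMs with
outcome space `I × G`: families `A` with every `A i` positive semidefinite and `L(A) = 1`. -/
def covSet {H : Type*} [NormedAddCommGroup H] [InnerProductSpace ℂ H]
    [FiniteDimensional ℂ H] {G : Type*} [Group G] [Fintype G] {I : Type*} [Fintype I]
    (U : G → (H →L[ℂ] H)) : Set (I → (H →L[ℂ] H)) :=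
  {A | (∀ i, (A i).IsPositive) ∧ Lmap U A = 1}

open RCLike

local notation "⟪" x ", " y "⟫" => @inner ℂ _ _ x y

lemma pos_apply_eq_zero {H : Type*} [NormedAddCommGroup H] [InnerProductSpace ℂ H]
    [FiniteDimensional ℂ H] {T : H →L[ℂ] H} (hT : T.IsPositive) {y : H}
    (h : ⟪T y, y⟫ = 0) : T y = 0 := by
  set z := T y with hz
  have hsymm := hT.isSelfAdjoint.isSymmetric
  have hC : (0:ℝ) ≤ RCLike.re ⟪T z, z⟫ := (RCLike.nonneg_iff.mp (hT.inner_nonneg_left z)).1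
  have key : ∀ t : ℝ, 0 ≤ 2 * t * (‖z‖^2) + t^2 * RCLike.re ⟪T z, z⟫ := by
    intro t
    have h0 := hT.2 (y + (t:ℂ) • z)
    rw [reApplyInnerSelf_apply] at h0
    have expand : ⟪T (y + (t:ℂ) • z), y + (t:ℂ) • z⟫
        = ⟪T y, y⟫ + (t:ℂ) * ⟪T y, z⟫ + (t:ℂ) * ⟪T z, y⟫ + (t:ℂ)^2 * ⟪T z, z⟫ := by
      simp only [map_add, map_smul, inner_add_left, inner_add_right, inner_smul_left,
        inner_smul_right, Complex.conj_ofReal]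
      ring
    have h1 : ⟪T y, z⟫ = ((‖z‖^2 : ℝ) : ℂ) := by
      rw [← hz, inner_self_eq_norm_sq_to_K]; norm_cast
    have h2 : ⟪T z, y⟫ = ((‖z‖^2 : ℝ) : ℂ) := by
      rw [show (⟪T z, y⟫) = ⟪z, T y⟫ from hsymm z y, ← hz, inner_self_eq_norm_sq_to_K]; norm_cast
    rw [expand, h, h1, h2] at h0
    have heq : RCLike.re ((0:ℂ) + (t:ℂ) * ((‖z‖^2 : ℝ) : ℂ) + (t:ℂ) * ((‖z‖^2 : ℝ) : ℂ)
        + (t:ℂ)^2 * ⟪T z, z⟫) = 2 * t * (‖z‖^2) + t^2 * RCLike.re ⟪T z, z⟫ := by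
      simp [Complex.add_re, Complex.mul_re, Complex.ofReal_re, Complex.ofReal_im,
        ← Complex.ofReal_pow]
      ring
    rw [heq] at h0
    exact h0
  have hr : ‖z‖^2 = 0 := by
    rcases eq_or_lt_of_le hC with hC0 | hC0
    · have := key (-1)
      nlinarith [sq_nonneg ‖z‖]
    · have := key (-(‖z‖^2 / RCLike.re ⟪T z, z⟫))
      set C := RCLike.re ⟪T z, z⟫ with hCdef
      have h3 : C ≠ 0 := ne_of_gt hC0
      have h4 : 2 * (-(‖z‖^2 / C)) * ‖z‖^2 + (-(‖z‖^2 / C))^2 * C = -((‖z‖^2)^2/C) := by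
        field_simp; ring
      rw [h4] at this
      have h5 : (‖z‖^2)^2 ≤ 0 := by
        by_contra hh
        push_neg at hh
        have := div_pos hh hC0
        linarith
      nlinarith [sq_nonneg ‖z‖, h5]
  have : ‖z‖ = 0 := by nlinarith [norm_nonneg z]
  simpa [hz] using norm_eq_zero.mp this

lemma Lmap_smul {H : Type*} [NormedAddCommGroup H] [InnerProductSpace ℂ H]
    [FiniteDimensional ℂ H] {G : Type*} [Group G] [Fintype G] {I : Type*} [Fintype I]
    (U : G → (H →L[ℂ] H)) (A : I → (H →L[ℂ] H)) (c : ℂ) :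
    Lmap U (fun i => c • A i) = c • Lmap U A := by
  simp only [Lmap, comp_smul, smul_comp, ← Finset.smul_sum]
  rw [smul_comm]

lemma decomp_eq {H : Type*} [NormedAddCommGroup H] [InnerProductSpace ℂ H]
    [FiniteDimensional ℂ H] [Nontrivial H]
    {G : Type*} [Group G] [Fintype G] {I : Type*} [Fintype I]
    (U : G → (H →L[ℂ] H)) (A B C : I → (H →L[ℂ] H))
    (hA : A ∈ covSet U) (hB : B ∈ covSet U) (hCpos : ∀ i, (C i).IsPositive)
    {a b : ℝ} (ha : 0 < a) (hb : 0 ≤ b)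
    (hsum : ∀ i, a • B i + b • C i = A i)
    (hrank : ∑ i, Module.finrank ℂ (LinearMap.range (A i : H →ₗ[ℂ] H)) = 1) :
    B = A := by
  classical
  obtain ⟨hApos, hAL⟩ := hA
  obtain ⟨hBpos, hBL⟩ := hB
  -- find the unique index with rank one
  set f : I → ℕ := fun i => Module.finrank ℂ (LinearMap.range (A i : H →ₗ[ℂ] H)) with hf
  obtain ⟨i₀, hi₀1, hi₀0⟩ : ∃ i₀, f i₀ = 1 ∧ ∀ i, i ≠ i₀ → f i = 0 := by
    have hex : ∃ i₀, f i₀ ≠ 0 := by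
      by_contra hc
      push_neg at hc
      have hz0 : ∑ i, f i = 0 := Finset.sum_eq_zero fun i _ => hc i
      rw [hz0] at hrank
      exact absurd hrank (by norm_num)
    obtain ⟨i₀, hi₀⟩ := hex
    have hle : f i₀ ≤ 1 := by
      calc f i₀ ≤ ∑ i, f i := Finset.single_le_sum (fun i _ => Nat.zero_le _) (Finset.mem_univ i₀)
        _ = 1 := hrank
    have h1 : f i₀ = 1 := by omega
    refine ⟨i₀, h1, fun i hi => ?_⟩
    have hsplit : f i₀ + ∑ j ∈ Finset.univ.erase i₀, f j = 1 := by
      rw [Finset.add_sum_erase _ f (Finset.mem_univ i₀)]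
      exact hrank
    have hz : ∑ j ∈ Finset.univ.erase i₀, f j = 0 := by omega
    have := Finset.sum_eq_zero_iff.mp hz i (Finset.mem_erase.mpr ⟨hi, Finset.mem_univ i⟩)
    exact this
  -- vanishing of the other components
  have hA0 : ∀ i, i ≠ i₀ → A i = 0 := by
    intro i hi
    have hbot : LinearMap.range (A i : H →ₗ[ℂ] H) = ⊥ := Submodule.finrank_eq_zero.mp (hi₀0 i hi)
    ext y
    have : (A i) y ∈ LinearMap.range (A i : H →ₗ[ℂ] H) := LinearMap.mem_range.mpr ⟨y, rfl⟩
    rw [hbot] at this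
    simpa using this
  -- `B` vanishes wherever `A` does
  have key0 : ∀ i (y : H), A i y = 0 → B i y = 0 := by
    intro i y hy
    have h1 : a • (B i) y + b • (C i) y = 0 := by
      have := congrArg (fun T : H →L[ℂ] H => T y) (hsum i)
      simpa [hy] using this
    have h2 : (a:ℂ) * ⟪(B i) y, y⟫ + (b:ℂ) * ⟪(C i) y, y⟫ = 0 := by
      have h1' : ((a:ℂ)) • (B i) y + ((b:ℂ)) • (C i) y = 0 := by
        rw [← algebraMap_smul ℂ a ((B i) y), ← algebraMap_smul ℂ b ((C i) y)] at h1
        simpa [Complex.coe_algebraMap] using h1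
      have h2' := congrArg (fun w => (⟪w, y⟫ : ℂ)) h1'
      simp only [inner_add_left, inner_smul_left, Complex.conj_ofReal, inner_zero_left] at h2'
      exact h2'
    have h3 : a * RCLike.re ⟪(B i) y, y⟫ + b * RCLike.re ⟪(C i) y, y⟫ = 0 := by
      have := congrArg Complex.re h2
      simpa [Complex.add_re, Complex.mul_re, Complex.ofReal_re, Complex.ofReal_im] using this
    have hBn : 0 ≤ RCLike.re ⟪(B i) y, y⟫ := by
      have := (hBpos i).2 y; rwa [reApplyInnerSelf_apply] at this
    have hCn : 0 ≤ RCLike.re ⟪(C i) y, y⟫ := by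
      have := (hCpos i).2 y; rwa [reApplyInnerSelf_apply] at this
    have hre0 : RCLike.re ⟪(B i) y, y⟫ = 0 := by nlinarith
    have hc0 : (⟪(B i) y, y⟫ : ℂ) = 0 := by
      have hreal := ((isPositive_iff_complex (B i)).mp (hBpos i) y).1
      rw [← hreal, hre0]
      simp
    exact pos_apply_eq_zero (hBpos i) hc0
  -- analysis at the rank-one index
  have hfr : Module.finrank ℂ (LinearMap.range (A i₀ : H →ₗ[ℂ] H)) = 1 := hi₀1
  obtain ⟨v, hv0, hvspan⟩ := finrank_eq_one_iff'.mp hfr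
  set x : H := (v : H) with hxdef
  have hx : x ≠ 0 := fun h => hv0 (Subtype.ext h)
  have hxn : (‖x‖ : ℂ) ^ 2 ≠ 0 :=
    pow_ne_zero 2 (Complex.ofReal_ne_zero.mpr (norm_ne_zero_iff.mpr hx))
  have hmem : ∀ w, w ∈ LinearMap.range (A i₀ : H →ₗ[ℂ] H) → ∃ c : ℂ, w = c • x := by
    intro w hw
    obtain ⟨c, hc⟩ := hvspan ⟨w, hw⟩
    exact ⟨c, by simpa [hxdef] using (congrArg Subtype.val hc).symm⟩
  have hTq : ∀ y, (⟪x, y⟫ : ℂ) = 0 → A i₀ y = 0 := by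
    intro y hy
    obtain ⟨c, hc⟩ := hmem (A i₀ y) (LinearMap.mem_range.mpr ⟨y, rfl⟩)
    obtain ⟨d, hd⟩ := hmem (A i₀ x) (LinearMap.mem_range.mpr ⟨x, rfl⟩)
    have hsymmT := (hApos i₀).isSelfAdjoint.isSymmetric
    have h0 : (⟪x, A i₀ y⟫ : ℂ) = 0 := by
      have hs := hsymmT x y
      simp only [ContinuousLinearMap.coe_coe] at hs
      rw [← hs, hd, inner_smul_left, hy, mul_zero]
    rw [hc, inner_smul_right, inner_self_eq_norm_sq_to_K] at h0
    have hc0 : c = 0 := by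
      rcases mul_eq_zero.mp h0 with h | h
      · exact h
      · exact absurd h hxn
    rw [hc, hc0, zero_smul]
  have hBq : ∀ y, (⟪x, y⟫ : ℂ) = 0 → B i₀ y = 0 := fun y hy => key0 i₀ y (hTq y hy)
  have horth : ∀ w : H, (⟪x, w - ((⟪x, w⟫ : ℂ)/(‖x‖:ℂ)^2) • x⟫ : ℂ) = 0 := by
    intro w
    rw [inner_sub_right, inner_smul_right, inner_self_eq_norm_sq_to_K]
    field_simp
    simp [hx]
  have hform : ∀ R : H →L[ℂ] H, R.IsPositive → (∀ y, (⟪x, y⟫:ℂ) = 0 → R y = 0) →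
      ∀ y, R y = (((⟪x, R x⟫:ℂ)/(‖x‖:ℂ)^2) * ((⟪x, y⟫:ℂ)/(‖x‖:ℂ)^2)) • x := by
    intro R hR hRq y
    have e1 : R y = ((⟪x, y⟫:ℂ)/(‖x‖:ℂ)^2) • R x := by
      have h0 := hRq _ (horth y)
      rw [map_sub, map_smul, sub_eq_zero] at h0
      exact h0
    have e2 : R x = ((⟪x, R x⟫:ℂ)/(‖x‖:ℂ)^2) • x := by
      set c := ((⟪x, R x⟫:ℂ)/(‖x‖:ℂ)^2) with hcdef
      set q := R x - c • x with hqdef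
      have hq0 : (⟪x, q⟫:ℂ) = 0 := horth (R x)
      have hRq0 : R q = 0 := hRq q hq0
      have hsym := hR.isSelfAdjoint.isSymmetric
      have hz : (⟪R x, q⟫:ℂ) = 0 := by
        have hs := hsym x q
        simp only [ContinuousLinearMap.coe_coe] at hs
        rw [hs, hRq0, inner_zero_right]
      have hx2 : R x = q + c • x := by rw [hqdef]; abel
      rw [hx2, inner_add_left, inner_smul_left, hq0, mul_zero, add_zero] at hz
      have hq' : q = 0 := inner_self_eq_zero.mp hz
      rw [hqdef] at hq'
      exact sub_eq_zero.mp hq'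
    rw [e1]
    conv_lhs => rw [e2]
    rw [smul_smul, mul_comm]
  set cT : ℂ := (⟪x, A i₀ x⟫:ℂ)/(‖x‖:ℂ)^2 with hcT
  set cB : ℂ := (⟪x, B i₀ x⟫:ℂ)/(‖x‖:ℂ)^2 with hcB
  have hformA : ∀ y, (A i₀) y = (cT * ((⟪x, y⟫:ℂ)/(‖x‖:ℂ)^2)) • x := by
    intro y
    have h := hform (A i₀) (hApos i₀) hTq y
    rw [← hcT] at h
    exact h
  have hformB : ∀ y, (B i₀) y = (cB * ((⟪x, y⟫:ℂ)/(‖x‖:ℂ)^2)) • x := by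
    intro y
    have h := hform (B i₀) (hBpos i₀) hBq y
    rw [← hcB] at h
    exact h
  have hT : cT ≠ 0 := by
    intro h0
    have hzero : A i₀ = 0 := by
      ext y
      rw [hformA y, h0]
      simp
    have hxmem : x ∈ LinearMap.range (A i₀ : H →ₗ[ℂ] H) := v.2
    rw [hzero] at hxmem
    simp only [LinearMap.mem_range] at hxmem
    obtain ⟨y, hy⟩ := hxmem
    exact hx (by simpa using hy.symm)
  have hBiA : B i₀ = (cB/cT) • A i₀ := by
    ext y
    rw [ContinuousLinearMap.smul_apply, hformB y, hformA y, smul_smul]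
    congr 1
    field_simp
  have hBfam : B = fun i => (cB/cT) • A i := by
    funext i
    by_cases hii : i = i₀
    · rw [hii]; exact hBiA
    · have hAi : A i = 0 := hA0 i hii
      have hBi : B i = 0 := by
        ext y
        exact key0 i y (by rw [hAi]; rfl)
      rw [hAi, hBi, smul_zero]
  have hL1 : (cB/cT) • (1 : H →L[ℂ] H) = 1 := by
    have h := hBL
    rw [hBfam, Lmap_smul, hAL] at h
    exact h
  obtain ⟨v0, hv0'⟩ := exists_ne (0 : H)
  have hc1 : cB/cT = 1 := by
    have happ := congrArg (fun T : H →L[ℂ] H => T v0) hL1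
    simp only [ContinuousLinearMap.smul_apply, ContinuousLinearMap.one_apply] at happ
    have hz : (cB/cT - 1) • v0 = 0 := by rw [sub_smul, one_smul, happ, sub_self]
    rcases smul_eq_zero.mp hz with h | h
    · exact sub_eq_zero.mp h
    · exact absurd h hv0'
  rw [hBfam]
  funext i
  rw [hc1, one_smul]

/-- If `A ∈ 𝒞` has total rank one, i.e. `Σ_i rank (A i) = 1`, then `A` is an extreme point
of `𝒞`. -/
theorem rank_one_extremePoint
    {H : Type*} [NormedAddCommGroup H] [InnerProductSpace ℂ H] [FiniteDimensional ℂ H]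
    [Nontrivial H]
    {G : Type*} [Group G] [Fintype G] {I : Type*} [Fintype I] [Nonempty I]
    (U : G → (H →L[ℂ] H))
    (hU1 : ∀ g, U g ∘L ContinuousLinearMap.adjoint (U g) = 1)
    (hU2 : ∀ g, ContinuousLinearMap.adjoint (U g) ∘L U g = 1)
    (hUm : ∀ g h, U (g * h) = U g ∘L U h)
    (A : I → (H →L[ℂ] H)) (hA : A ∈ covSet U)
    (hrank : ∑ i, Module.finrank ℂ (LinearMap.range (A i : H →ₗ[ℂ] H)) = 1) :
    A ∈ Set.extremePoints ℝ (covSet U) := by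
  rw [mem_extremePoints]
  refine ⟨hA, ?_⟩
  intro B hB C hC hseg
  obtain ⟨a, b, ha, hb, hab, hsum⟩ := hseg
  have hsum' : ∀ i, a • B i + b • C i = A i := fun i => by simpa using congrFun hsum i
  constructor
  · exact decomp_eq U A B C hA hB hC.1 ha hb.le hsum' hrank
  · refine decomp_eq U A C B hA hC hB.1 hb ha.le (fun i => ?_) hrank
    rw [add_comm]
    exact hsum' i
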